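/- Let A be a commutative ring and I, J ideals of A. Then Ī · J̄ ⊆ (I·J)‾, i.e. the product of an element integral over I with an element integral over J is integral over IJ. -/

import Mathlib

/-- `f` is integral over the ideal `I`: there is an equation
`f^k + a₁ f^(k-1) + ⋯ + a_k = 0` with `aᵢ ∈ Iⁱ` (and `k ≥ 1`). -/
def IsIntegralOverIdeal {A : Type*} [CommRing A] (I : Ideal A) (f : A) : Prop :=
  ∃ (k : ℕ) (a : ℕ → A), 0 < k ∧ (∀ i ∈ Finset.Icc 1 k, a i ∈ I ^ i) ∧
    f ^ k + ∑ i ∈ Finset.Icc 1 k, a i * f ^ (k - i) = 0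


section Aux

open Polynomial

variable {A : Type*} [CommRing A]

/-- Any element of `I ^ i` lies in `I₀ ^ i` for some finitely generated `I₀ ≤ I`. -/
lemma exists_fg_le_mem_pow (I : Ideal A) :
    ∀ (i : ℕ) (a : A), a ∈ I ^ i → ∃ I₀ : Ideal A, I₀.FG ∧ I₀ ≤ I ∧ a ∈ I₀ ^ i := by
  intro i
  induction i with
  | zero =>
    intro a ha
    exact ⟨⊥, Submodule.fg_bot, bot_le, by simpa using ha⟩
  | succ n ih =>
    intro a ha
    rw [pow_succ] at ha
    refine Submodule.mul_induction_on ha ?_ ?_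
    · intro m hm r hr
      obtain ⟨I₀, hfg, hle, hmem⟩ := ih m hm
      refine ⟨I₀ ⊔ Ideal.span {r}, Submodule.FG.sup hfg (Submodule.fg_span (Set.finite_singleton r)),
        sup_le hle (by rwa [Ideal.span_le, Set.singleton_subset_iff]), ?_⟩
      rw [pow_succ]
      exact Ideal.mul_mem_mul (Ideal.pow_right_mono le_sup_left n hmem)
        (le_sup_right (a := I₀) (Ideal.subset_span rfl))
    · rintro x y ⟨I₁, h1, l1, m1⟩ ⟨I₂, h2, l2, m2⟩
      exact ⟨I₁ ⊔ I₂, Submodule.FG.sup h1 h2, sup_le l1 l2,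
        add_mem (Ideal.pow_right_mono le_sup_left _ m1)
          (Ideal.pow_right_mono le_sup_right _ m2)⟩


lemma ideal_add_le {P Q R : Ideal A} (h1 : P ≤ R) (h2 : Q ≤ R) : P + Q ≤ R := by
  rw [Ideal.add_eq_sup]; exact sup_le h1 h2

lemma ideal_le_add_left {P Q : Ideal A} : P ≤ P + Q := by
  rw [Ideal.add_eq_sup]; exact le_sup_left

lemma ideal_le_add_right {P Q : Ideal A} : Q ≤ P + Q := by
  rw [Ideal.add_eq_sup]; exact le_sup_right

lemma span_mul_pow_le (I : Ideal A) (x : A) (n : ℕ) :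
    Ideal.span {x} * (I + Ideal.span {x}) ^ n ≤
      I * (I + Ideal.span {x}) ^ n + Ideal.span {x ^ (n + 1)} := by
  induction n with
  | zero => simpa using ideal_le_add_right
  | succ n ih =>
    set T := I + Ideal.span {x} with hT
    have hsT : Ideal.span {x ^ (n + 1)} ≤ T ^ (n + 1) := by
      rw [Ideal.span_le, Set.singleton_subset_iff]
      refine Ideal.pow_mem_pow (ideal_le_add_right ?_) (n + 1)
      exact Ideal.subset_span rfl
    calc Ideal.span {x} * T ^ (n + 1) = (Ideal.span {x} * T ^ n) * T := by ring
      _ ≤ (I * T ^ n + Ideal.span {x ^ (n + 1)}) * T := Ideal.mul_mono ih le_rfl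
      _ = I * T ^ (n + 1) + (Ideal.span {x ^ (n + 1)} * I +
            Ideal.span {x ^ (n + 1)} * Ideal.span {x}) := by
          rw [hT]; ring
      _ ≤ I * T ^ (n + 1) + Ideal.span {x ^ (n + 2)} := by
          refine ideal_add_le ideal_le_add_left (ideal_add_le ?_ ?_)
          · refine ideal_le_add_left.trans' ?_
            rw [mul_comm]
            exact Ideal.mul_mono le_rfl hsT
          · rw [Ideal.span_singleton_mul_span_singleton, ← pow_succ]
            exact ideal_le_add_right

lemma exists_reduction (I : Ideal A) (f : A) (h : IsIntegralOverIdeal I f) :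
    ∃ m : ℕ, ∀ n, m ≤ n → (I + Ideal.span {f}) ^ (n + 1) ≤ I * (I + Ideal.span {f}) ^ n := by
  obtain ⟨k, a, hk, ha, heq⟩ := h
  obtain ⟨m, rfl⟩ := Nat.exists_eq_succ_of_ne_zero hk.ne'
  set T := I + Ideal.span {f} with hT
  have hfT : f ∈ T := ideal_le_add_right (Ideal.subset_span rfl)
  have hfk : f ^ (m + 1) ∈ I * T ^ m := by
    have : f ^ (m + 1) = -∑ i ∈ Finset.Icc 1 (m + 1), a i * f ^ (m + 1 - i) :=
      eq_neg_of_add_eq_zero_left heq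
    rw [this]
    refine neg_mem (Submodule.sum_mem _ fun i hi => ?_)
    obtain ⟨hi1, hi2⟩ := Finset.mem_Icc.mp hi
    have h1 : a i * f ^ (m + 1 - i) ∈ I ^ i * T ^ (m + 1 - i) :=
      Ideal.mul_mem_mul (ha i hi) (Ideal.pow_mem_pow hfT _)
    refine (?_ : I ^ i * T ^ (m + 1 - i) ≤ I * T ^ m) h1
    have hIi : I ^ i ≤ I * T ^ (i - 1) := by
      obtain ⟨j, rfl⟩ := Nat.exists_eq_succ_of_ne_zero (by omega : i ≠ 0)
      rw [pow_succ', show j.succ - 1 = j from rfl]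
      exact Ideal.mul_mono le_rfl (Ideal.pow_right_mono ideal_le_add_left j)
    calc I ^ i * T ^ (m + 1 - i) ≤ (I * T ^ (i - 1)) * T ^ (m + 1 - i) :=
          Ideal.mul_mono hIi le_rfl
      _ = I * (T ^ (i - 1) * T ^ (m + 1 - i)) := mul_assoc _ _ _
      _ = I * T ^ m := by rw [← pow_add]; congr 2; omega
  have hTk : T ^ (m + 1) ≤ I * T ^ m := by
    have : T ^ (m + 1) = I * T ^ m + Ideal.span {f} * T ^ m := by
      rw [pow_succ']; rw [hT]; ring
    rw [this]
    refine ideal_add_le le_rfl ((span_mul_pow_le I f m).trans (ideal_add_le le_rfl ?_))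
    rw [Ideal.span_le, Set.singleton_subset_iff]
    exact hfk
  refine ⟨m, fun n hn => ?_⟩
  have : T ^ (n + 1) = T ^ (n - m) * T ^ (m + 1) := by rw [← pow_add]; congr 1; omega
  rw [this]
  calc T ^ (n - m) * T ^ (m + 1) ≤ T ^ (n - m) * (I * T ^ m) := Ideal.mul_mono le_rfl hTk
    _ = I * (T ^ (n - m) * T ^ m) := by ring
    _ = I * T ^ n := by rw [← pow_add]; congr 2; omega

lemma exists_fg_integral (I : Ideal A) (f : A) (h : IsIntegralOverIdeal I f) :
    ∃ I₀ : Ideal A, I₀.FG ∧ I₀ ≤ I ∧ IsIntegralOverIdeal I₀ f := by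
  obtain ⟨k, a, hk, ha, heq⟩ := h
  choose I₀ hfg hle hmem using fun i (hi : i ∈ Finset.Icc 1 k) =>
    exists_fg_le_mem_pow I i (a i) (ha i hi)
  refine ⟨(Finset.Icc 1 k).attach.sup (fun i => I₀ i.1 i.2), ?_, ?_, k, a, hk, fun i hi => ?_, heq⟩
  · exact Submodule.fg_finset_sup _ _ fun i _ => hfg i.1 i.2
  · exact Finset.sup_le fun i _ => hle i.1 i.2
  · exact Ideal.pow_right_mono (Finset.le_sup (f := fun i => I₀ i.1 i.2)
      (Finset.mem_attach _ ⟨i, hi⟩)) i (hmem i hi)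

lemma integral_mono' {I I' : Ideal A} (h : I ≤ I') {f : A} (hf : IsIntegralOverIdeal I f) :
    IsIntegralOverIdeal I' f := by
  obtain ⟨k, a, hk, ha, heq⟩ := hf
  exact ⟨k, a, hk, fun i hi => Ideal.pow_right_mono h i (ha i hi), heq⟩

lemma mul_integral_fg (I J : Ideal A) (hIfg : I.FG) (hJfg : J.FG) (f g : A)
    (hf : IsIntegralOverIdeal I f) (hg : IsIntegralOverIdeal J g) :
    IsIntegralOverIdeal (I * J) (f * g) := by
  classical
  obtain ⟨mf, hmf⟩ := exists_reduction I f hf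
  obtain ⟨mg, hmg⟩ := exists_reduction J g hg
  set Tf := I + Ideal.span {f} with hTf
  set Tg := J + Ideal.span {g} with hTg
  set L := Tf * Tg with hLdef
  obtain ⟨N, hNf, hNg, hN1⟩ : ∃ N, mf ≤ N ∧ mg ≤ N ∧ 0 < N := ⟨mf + mg + 1, by omega, by omega, by omega⟩
  have hL1 : L ^ (N + 1) ≤ (I * J) * L ^ N := by
    calc L ^ (N + 1) = Tf ^ (N + 1) * Tg ^ (N + 1) := mul_pow _ _ _
      _ ≤ (I * Tf ^ N) * (J * Tg ^ N) :=
          Ideal.mul_mono (hmf N hNf) (hmg N hNg)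
      _ = (I * J) * (Tf ^ N * Tg ^ N) := by ring
      _ = (I * J) * L ^ N := by rw [hLdef, mul_pow]
  have hfgL : f * g ∈ L :=
    Ideal.mul_mem_mul (ideal_le_add_right (Ideal.subset_span rfl))
      (ideal_le_add_right (Ideal.subset_span rfl))
  have hstable : ∀ x ∈ (L ^ N : Ideal A), (LinearMap.mul A A) (f * g) x ∈ (L ^ N : Ideal A) := by
    intro x hx
    have : (f * g) * x ∈ L ^ (N + 1) := by
      rw [pow_succ']
      exact Ideal.mul_mem_mul hfgL hx
    simpa using Ideal.mul_le_right (hL1 this)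
  haveI : Module.Finite A ↥(L ^ N : Ideal A) :=
    Module.Finite.iff_fg.mpr (Submodule.FG.pow (Submodule.FG.mul
      (Submodule.FG.sup hIfg (Submodule.fg_span (Set.finite_singleton f)))
      (Submodule.FG.sup hJfg (Submodule.fg_span (Set.finite_singleton g)))) N)
  set φ : Module.End A ↥(L ^ N : Ideal A) := ((LinearMap.mul A A) (f * g)).restrict hstable
    with hφ
  have hφcoe : ∀ x : ↥(L ^ N : Ideal A), (φ x : A) = (f * g) * x := by
    intro x
    rw [hφ, LinearMap.restrict_coe_apply]
    simp
  have hrange : LinearMap.range φ ≤ (I * J) • (⊤ : Submodule A ↥(L ^ N : Ideal A)) := by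
    rintro _ ⟨y, rfl⟩
    rw [Submodule.mem_smul_top_iff, Ideal.smul_eq_mul, hφcoe]
    refine hL1 ?_
    rw [pow_succ']
    exact Ideal.mul_mem_mul hfgL y.2
  obtain ⟨p, hp, -, hcoeff, haeval⟩ :=
    LinearMap.exists_monic_and_coeff_mem_pow_and_aeval_eq_zero_of_range_le_smul A φ (I * J) hrange
  have hpow : ∀ (n : ℕ) (x : ↥(L ^ N : Ideal A)), ((φ ^ n) x : A) = (f * g) ^ n * x := by
    intro n
    induction n with
    | zero => intro x; simp
    | succ n ih =>
      intro x
      have h1 : (φ ^ (n + 1)) x = (φ ^ n) (φ x) := by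
        conv_lhs => rw [pow_succ]
        rw [Module.End.mul_apply]
      rw [h1, ih, hφcoe]
      ring
  have heval : ∀ (q : A[X]) (x : ↥(L ^ N : Ideal A)),
      ((Polynomial.aeval φ q) x : A) = q.eval (f * g) * x := by
    intro q
    induction q using Polynomial.induction_on' with
    | add q r hq hr =>
      intro x
      rw [map_add, Polynomial.eval_add, LinearMap.add_apply, Submodule.coe_add, hq, hr]
      ring
    | monomial n c =>
      intro x
      rw [Polynomial.aeval_monomial, Polynomial.eval_monomial]
      rw [Module.End.mul_apply]
      have : ((algebraMap A (Module.End A ↥(L ^ N : Ideal A)) c) ((φ ^ n) x) : A)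
          = c * ((φ ^ n) x : A) := by
        rw [Module.algebraMap_end_apply, Submodule.coe_smul, smul_eq_mul]
      rw [this, hpow]
      ring
  set d := p.natDegree with hd
  have h0 : p.eval (f * g) * (f * g) ^ N = 0 := by
    have hx0 : (f * g) ^ N ∈ (L ^ N : Ideal A) := Ideal.pow_mem_pow hfgL N
    have := heval p ⟨(f * g) ^ N, hx0⟩
    rw [haeval] at this
    simpa using this.symm
  refine ⟨d + N, fun i => if i ≤ d then p.coeff (d - i) else 0, by omega, ?_, ?_⟩
  · intro i hi
    show (if i ≤ d then p.coeff (d - i) else 0) ∈ (I * J) ^ i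
    obtain ⟨hi1, hi2⟩ := Finset.mem_Icc.mp hi
    by_cases hid : i ≤ d
    · rw [if_pos hid]
      have := hcoeff (d - i)
      rwa [Nat.sub_sub_self hid] at this
    · rw [if_neg hid]
      exact zero_mem _
  · have hsum : ∑ i ∈ Finset.Icc 1 (d + N), (if i ≤ d then p.coeff (d - i) else 0)
        * (f * g) ^ (d + N - i) = ∑ j ∈ Finset.range d, p.coeff j * (f * g) ^ (N + j) := by
      rw [← Finset.sum_subset (Finset.Icc_subset_Icc le_rfl (Nat.le_add_right d N))
        (fun i hi hni => ?_)]
      · refine Finset.sum_bij' (fun i _ => d - i) (fun j _ => d - j) ?_ ?_ ?_ ?_ ?_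
        · intro i hi
          obtain ⟨h1, h2⟩ := Finset.mem_Icc.mp hi
          show d - i ∈ Finset.range d
          exact Finset.mem_range.mpr (by omega)
        · intro j hj
          have := Finset.mem_range.mp hj
          show d - j ∈ Finset.Icc 1 d
          exact Finset.mem_Icc.mpr (by omega)
        · intro i hi
          obtain ⟨h1, h2⟩ := Finset.mem_Icc.mp hi
          exact Nat.sub_sub_self h2
        · intro j hj
          have := Finset.mem_range.mp hj
          exact Nat.sub_sub_self (le_of_lt this)
        · intro i hi
          obtain ⟨h1, h2⟩ := Finset.mem_Icc.mp hi
          show (if i ≤ d then p.coeff (d - i) else 0) * (f * g) ^ (d + N - i)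
              = p.coeff (d - i) * (f * g) ^ (N + (d - i))
          rw [if_pos h2]
          congr 1
          rw [Nat.add_comm d N, Nat.add_sub_assoc h2]
      · obtain ⟨h1, h2⟩ := Finset.mem_Icc.mp hi
        have : ¬ i ≤ d := by
          intro h
          exact hni (Finset.mem_Icc.mpr ⟨h1, h⟩)
        rw [if_neg this, zero_mul]
    rw [hsum]
    have hc1 : p.coeff d = 1 := hp.coeff_natDegree
    have hlead : (f * g) ^ (d + N) = p.coeff d * (f * g) ^ (N + d) := by
      rw [hc1, one_mul]
      ring
    rw [hlead, add_comm, ← Finset.sum_range_succ (fun j => p.coeff j * (f * g) ^ (N + j)) d]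
    have : ∑ j ∈ Finset.range (d + 1), p.coeff j * (f * g) ^ (N + j)
        = p.eval (f * g) * (f * g) ^ N := by
      rw [Polynomial.eval_eq_sum_range, Finset.sum_mul]
      refine Finset.sum_congr rfl fun j _ => ?_
      rw [pow_add]
      ring
    rw [this, h0]

end Aux

/-- `Ī·J̄ ⊆ (I·J)‾`: the product of an element integral over `I`
with an element integral over `J` is integral over `I·J`; consequently, for the
integral-closure ideals, `Ī·J̄ ≤ (I·J)‾`. -/
theorem integralClosure_mul_subset {A : Type*} [CommRing A] (I J : Ideal A)
    (Ibar Jbar IJbar : Ideal A)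
    (hIbar : ∀ f : A, f ∈ Ibar ↔ IsIntegralOverIdeal I f)
    (hJbar : ∀ f : A, f ∈ Jbar ↔ IsIntegralOverIdeal J f)
    (hIJbar : ∀ f : A, f ∈ IJbar ↔ IsIntegralOverIdeal (I * J) f) :
    (∀ f g : A, IsIntegralOverIdeal I f → IsIntegralOverIdeal J g →
        IsIntegralOverIdeal (I * J) (f * g)) ∧
    Ibar * Jbar ≤ IJbar := by
  have main : ∀ f g : A, IsIntegralOverIdeal I f → IsIntegralOverIdeal J g →
      IsIntegralOverIdeal (I * J) (f * g) := by
    intro f g hf hg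
    obtain ⟨I₀, hIfg, hIle, hf₀⟩ := exists_fg_integral I f hf
    obtain ⟨J₀, hJfg, hJle, hg₀⟩ := exists_fg_integral J g hg
    exact integral_mono' (Ideal.mul_mono hIle hJle)
      (mul_integral_fg I₀ J₀ hIfg hJfg f g hf₀ hg₀)
  exact ⟨main, Ideal.mul_le.mpr fun r hr s hs =>
    (hIJbar _).mpr (main r s ((hIbar r).mp hr) ((hJbar s).mp hs))⟩
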